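/- arXiv:1102.1141 — 4 statements merged into one kernel-verified Lean document; each statement's English description precedes it below -/
import Mathlib

section
/- Let G be a finite simple graph that is a König-Egerváry graph, and let v be a vertex of G. If μ(G) = μ(G - v) + 1, then G - v is a König-Egerváry graph if and only if v does not belong to core(G). -/
/-- A set of vertices is independent if no two of its vertices are adjacent. -/
def IsIndep {V : Type*} (G : SimpleGraph V) (s : Set V) : Prop :=
  ∀ u ∈ s, ∀ w ∈ s, ¬ G.Adj u w

open Classical in
/-- The independence number `α(G)`: the maximum cardinality of an independent set. -/
noncomputable def indepNum {V : Type*} (G : SimpleGraph V) [Fintype V] : ℕ :=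
  Nat.findGreatest (fun n => ∃ s : Set V, IsIndep G s ∧ s.ncard = n) (Fintype.card V)

/-- A matching: a set of edges of `G` that are pairwise vertex-disjoint. -/
def IsMatchingSet {V : Type*} (G : SimpleGraph V) (M : Finset (Sym2 V)) : Prop :=
  (↑M : Set (Sym2 V)) ⊆ G.edgeSet ∧
    ∀ e ∈ M, ∀ f ∈ M, e ≠ f → ∀ x : V, ¬(x ∈ e ∧ x ∈ f)

open Classical in
/-- The matching number `μ(G)`: the maximum cardinality of a matching. -/
noncomputable def matchNum {V : Type*} (G : SimpleGraph V) [Fintype V] : ℕ :=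
  Nat.findGreatest (fun n => ∃ M : Finset (Sym2 V), IsMatchingSet G M ∧ M.card = n)
    (Fintype.card V)

/-- A maximum independent set: an independent set of cardinality `α(G)`. -/
def IsMaxIndep {V : Type*} (G : SimpleGraph V) [Fintype V] (s : Set V) : Prop :=
  IsIndep G s ∧ s.ncard = indepNum G

/-- `core(G)`: the intersection of all maximum independent sets of `G`. -/
def core {V : Type*} (G : SimpleGraph V) [Fintype V] : Set V :=
  {v : V | ∀ s : Set V, IsMaxIndep G s → v ∈ s}

/-- `G` is a König-Egerváry graph if `α(G) + μ(G) = |V(G)|`. -/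
def IsKonigEgervary {V : Type*} (G : SimpleGraph V) [Fintype V] : Prop :=
  indepNum G + matchNum G = Fintype.card V

/-- `G - v`: the subgraph of `G` induced on `V \ {v}`. -/
def deleteVert {V : Type*} (G : SimpleGraph V) (v : V) : SimpleGraph {u : V // u ≠ v} :=
  SimpleGraph.comap Subtype.val G

/-- A perfect matching: a matching covering all vertices of `G`. -/
def HasPerfectMatching {V : Type*} (G : SimpleGraph V) : Prop :=
  ∃ M : Finset (Sym2 V), IsMatchingSet G M ∧ ∀ v : V, ∃ e ∈ M, v ∈ e

/-- `N(A)`: the set of all vertices adjacent to some vertex of `A`. -/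
def nbhd {V : Type*} (G : SimpleGraph V) (A : Set V) : Set V :=
  {w : V | ∃ u ∈ A, G.Adj u w}

section aux
variable {V : Type*} [Fintype V] [DecidableEq V] (G : SimpleGraph V)
set_option linter.unusedSectionVars false

lemma le_indepNum {s : Set V} (hs : IsIndep G s) : s.ncard ≤ indepNum G := by
  classical
  have hb : s.ncard ≤ Fintype.card V := by
    simpa [Set.ncard_univ] using Set.ncard_le_ncard (Set.subset_univ s) (Set.toFinite _)
  unfold indepNum
  exact Nat.le_findGreatest hb ⟨s, hs, rfl⟩

lemma exists_max_indep : ∃ s : Set V, IsIndep G s ∧ s.ncard = indepNum G := by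
  classical
  have h0 : (fun n => ∃ s : Set V, IsIndep G s ∧ s.ncard = n) 0 :=
    ⟨∅, fun u hu => absurd hu (Set.notMem_empty u), by simp⟩
  exact Nat.findGreatest_spec (P := fun n => ∃ s : Set V, IsIndep G s ∧ s.ncard = n) (Nat.zero_le _) h0

variable (v : V)

lemma indep_image {s : Set {u : V // u ≠ v}} (hs : IsIndep (deleteVert G v) s) :
    IsIndep G (Subtype.val '' s) := by
  rintro u ⟨a, ha, rfl⟩ w ⟨b, hb, rfl⟩
  exact hs a ha b hb

lemma indep_preimage {s : Set V} (hs : IsIndep G s) :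
    IsIndep (deleteVert G v) (Subtype.val ⁻¹' s) := by
  intro a ha b hb
  exact hs a ha b hb

lemma notcore_iff :
    indepNum (deleteVert G v) = indepNum G ↔
      ∃ s : Set V, IsIndep G s ∧ s.ncard = indepNum G ∧ v ∉ s := by
  constructor
  · intro he
    obtain ⟨s, hs, hcard⟩ := exists_max_indep (deleteVert G v)
    refine ⟨Subtype.val '' s, indep_image G v hs, ?_, ?_⟩
    · rw [Set.ncard_image_of_injective _ Subtype.val_injective, hcard, he]
    · rintro ⟨a, _, ha⟩; exact a.2 ha
  · rintro ⟨s, hs, hcard, hv⟩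
    have himg : Subtype.val '' (Subtype.val ⁻¹' s : Set {u : V // u ≠ v}) = s := by
      ext x
      simp only [Set.mem_image, Set.mem_preimage, Subtype.exists, exists_and_right,
        exists_eq_right]
      exact ⟨fun ⟨_, h⟩ => h, fun h => ⟨fun he => hv (he ▸ h), h⟩⟩
    have h1 : (Subtype.val ⁻¹' s : Set {u : V // u ≠ v}).ncard = s.ncard := by
      conv_rhs => rw [← himg]
      rw [Set.ncard_image_of_injective _ Subtype.val_injective]
    have hle : indepNum G ≤ indepNum (deleteVert G v) := by
      rw [← hcard, ← h1]
      exact le_indepNum _ (indep_preimage G v hs)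
    have hge : indepNum (deleteVert G v) ≤ indepNum G := by
      obtain ⟨t, ht, htc⟩ := exists_max_indep (deleteVert G v)
      rw [← htc, ← Set.ncard_image_of_injective t Subtype.val_injective]
      exact le_indepNum _ (indep_image G v ht)
    omega

end aux

theorem stmt_1 {V : Type*} [Fintype V] [DecidableEq V] (G : SimpleGraph V)
    (hKE : IsKonigEgervary G) (v : V)
    (h : matchNum G = matchNum (deleteVert G v) + 1) :
    IsKonigEgervary (deleteVert G v) ↔ v ∉ core G := by
  have hc : Fintype.card {u : V // u ≠ v} = Fintype.card V - 1 := by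
    rw [Fintype.card_subtype_compl (p := fun u => u = v)] -- might fail; fallback below
    simp
  have hpos : 1 ≤ Fintype.card V := Fintype.card_pos_iff.mpr ⟨v⟩
  have hcore : v ∉ core G ↔
      ∃ s : Set V, IsIndep G s ∧ s.ncard = indepNum G ∧ v ∉ s := by
    unfold core IsMaxIndep
    simp only [Set.mem_setOf_eq, not_forall]
    constructor
    · rintro ⟨s, ⟨h1, h2⟩, h3⟩; exact ⟨s, h1, h2, h3⟩
    · rintro ⟨s, h1, h2, h3⟩; exact ⟨s, ⟨h1, h2⟩, h3⟩
  rw [hcore, ← notcore_iff G v]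
  unfold IsKonigEgervary at hKE ⊢
  rw [hc]
  clear hcore
  omega
end

section
/- Let G be a finite simple König-Egerváry graph that has a perfect matching, and let v be a vertex of G. Then v belongs to core(G) if and only if G - v is not a König-Egerváry graph. -/
set_option linter.unusedSectionVars false

section Aux
variable {V : Type*} [Fintype V] [DecidableEq V] (G : SimpleGraph V)

lemma aux_ncard_le_card (s : Set V) : s.ncard ≤ Fintype.card V := by
  simpa [Set.ncard_univ, Nat.card_eq_fintype_card] using
    Set.ncard_le_ncard (Set.subset_univ s) Set.finite_univ

open Classical in
lemma aux_indep_le {s : Set V} (h : IsIndep G s) : s.ncard ≤ indepNum G :=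
  Nat.le_findGreatest (aux_ncard_le_card s) ⟨s, h, rfl⟩

open Classical in
lemma aux_exists_maxIndep : ∃ s : Set V, IsMaxIndep G s := by
  have h0 : ∃ s : Set V, IsIndep G s ∧ s.ncard = 0 :=
    ⟨∅, fun u hu => absurd hu (Set.notMem_empty u), by simp⟩
  obtain ⟨s, hs, hc⟩ := Nat.findGreatest_spec
    (P := fun n => ∃ s : Set V, IsIndep G s ∧ s.ncard = n) (Nat.zero_le _) h0
  exact ⟨s, hs, hc⟩

/-- vertex finset of an edge -/
noncomputable def eVerts (e : Sym2 V) : Finset V := {x | x ∈ e}.toFinset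

lemma mem_eVerts {e : Sym2 V} {x : V} : x ∈ eVerts e ↔ x ∈ e := by
  simp [eVerts]

lemma eVerts_card {e : Sym2 V} (he : e ∈ G.edgeSet) : (eVerts e).card = 2 := by
  induction e using Sym2.ind with
  | _ a b =>
    have hab : a ≠ b := (G.mem_edgeSet.mp he).ne
    have : eVerts (V := V) s(a, b) = {a, b} := by
      ext x; simp [mem_eVerts, Sym2.mem_iff]
    rw [this, Finset.card_pair hab]

lemma aux_two_mul_card {M : Finset (Sym2 V)} (h : IsMatchingSet G M) :
    2 * M.card ≤ Fintype.card V := by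
  classical
  have hdisj : ∀ e ∈ M, ∀ f ∈ M, e ≠ f → Disjoint (eVerts e) (eVerts f) := by
    intro e he f hf hne
    refine Finset.disjoint_left.mpr fun x hxe hxf => ?_
    exact h.2 e he f hf hne x ⟨mem_eVerts.mp hxe, mem_eVerts.mp hxf⟩
  have hcard : (M.biUnion eVerts).card = 2 * M.card := by
    rw [Finset.card_biUnion hdisj]
    rw [Finset.sum_congr rfl fun e he => eVerts_card G (h.1 he), Finset.sum_const,
      smul_eq_mul, mul_comm]
  calc 2 * M.card = (M.biUnion eVerts).card := hcard.symm
    _ ≤ Fintype.card V := Finset.card_le_card (Finset.subset_univ _) |>.trans_eq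
        (by simp)

open Classical in
lemma aux_matching_le {M : Finset (Sym2 V)} (h : IsMatchingSet G M) :
    M.card ≤ matchNum G :=
  Nat.le_findGreatest (by have := aux_two_mul_card G h; omega) ⟨M, h, rfl⟩

open Classical in
lemma aux_exists_maxMatching :
    ∃ M : Finset (Sym2 V), IsMatchingSet G M ∧ M.card = matchNum G := by
  have h0 : ∃ M : Finset (Sym2 V), IsMatchingSet G M ∧ M.card = 0 :=
    ⟨∅, ⟨by simp, by simp⟩, by simp⟩
  exact Nat.findGreatest_spec
    (P := fun n => ∃ M : Finset (Sym2 V), IsMatchingSet G M ∧ M.card = n)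
    (Nat.zero_le _) h0

lemma aux_perfect_card {M : Finset (Sym2 V)} (hM : IsMatchingSet G M)
    (hP : ∀ v : V, ∃ e ∈ M, v ∈ e) : 2 * M.card = Fintype.card V := by
  classical
  have hdisj : ∀ e ∈ M, ∀ f ∈ M, e ≠ f → Disjoint (eVerts e) (eVerts f) := by
    intro e he f hf hne
    refine Finset.disjoint_left.mpr fun x hxe hxf => ?_
    exact hM.2 e he f hf hne x ⟨mem_eVerts.mp hxe, mem_eVerts.mp hxf⟩
  have huniv : M.biUnion eVerts = Finset.univ := by
    ext x
    simp only [Finset.mem_biUnion, Finset.mem_univ, iff_true]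
    obtain ⟨e, he, hx⟩ := hP x
    exact ⟨e, he, mem_eVerts.mpr hx⟩
  have := Finset.card_biUnion hdisj
  rw [huniv, Finset.card_univ] at this
  rw [this, Finset.sum_congr rfl fun e he => eVerts_card G (hM.1 he), Finset.sum_const,
    smul_eq_mul, mul_comm]

end Aux

section Del
variable {V : Type*} [Fintype V] [DecidableEq V] (G : SimpleGraph V) (v : V)

lemma aux_card_del : Fintype.card {u : V // u ≠ v} = Fintype.card V - 1 := by
  simp [Fintype.card_subtype_compl]

lemma aux_indep_del_image {s : Set {u : V // u ≠ v}} (h : IsIndep (deleteVert G v) s) :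
    IsIndep G (Subtype.val '' s) ∧ (Subtype.val '' s).ncard = s.ncard ∧
      v ∉ Subtype.val '' s := by
  refine ⟨?_, Set.ncard_image_of_injective s Subtype.val_injective, ?_⟩
  · rintro u ⟨a, ha, rfl⟩ w ⟨b, hb, rfl⟩ hadj
    exact h a ha b hb hadj
  · rintro ⟨a, _, ha⟩; exact a.2 ha

lemma aux_indepNum_del_le : indepNum (deleteVert G v) ≤ indepNum G := by
  obtain ⟨s, hs, hc⟩ := aux_exists_maxIndep (deleteVert G v)
  obtain ⟨hi, hcard, _⟩ := aux_indep_del_image G v hs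
  calc indepNum (deleteVert G v) = (Subtype.val '' s).ncard := by rw [hcard, hc]
    _ ≤ indepNum G := aux_indep_le G hi

lemma aux_core_iff : v ∈ core G ↔ indepNum (deleteVert G v) < indepNum G := by
  constructor
  · intro hv
    rcases lt_or_eq_of_le (aux_indepNum_del_le G v) with h | h
    · exact h
    · exfalso
      obtain ⟨s, hs, hc⟩ := aux_exists_maxIndep (deleteVert G v)
      obtain ⟨hi, hcard, hnv⟩ := aux_indep_del_image G v hs
      have : IsMaxIndep G (Subtype.val '' s) := ⟨hi, by rw [hcard, hc, h]⟩
      exact hnv (hv _ this)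
  · intro h s hs
    by_contra hv
    set s' : Set {u : V // u ≠ v} := Subtype.val ⁻¹' s with hs'
    have himg : Subtype.val '' s' = s := by
      ext x
      constructor
      · rintro ⟨a, ha, rfl⟩; exact ha
      · intro hx
        exact ⟨⟨x, fun he => hv (he ▸ hx)⟩, hx, rfl⟩
    have hind : IsIndep (deleteVert G v) s' := by
      intro a ha b hb hadj
      exact hs.1 a.1 ha b.1 hb hadj
    have hle := aux_indep_le (deleteVert G v) hind
    have hc : s'.ncard = s.ncard := by
      rw [← Set.ncard_image_of_injective s' Subtype.val_injective, himg]
    rw [hc, hs.2] at hle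
    omega

lemma aux_mem_comap_edgeSet {W : Type*} (f : W → V) (e : Sym2 W) :
    e ∈ (SimpleGraph.comap f G).edgeSet ↔ Sym2.map f e ∈ G.edgeSet := by
  induction e using Sym2.ind with
  | _ a b => simp [Sym2.map_pair_eq, SimpleGraph.mem_edgeSet]

lemma aux_matchNum_del_ge {M : Finset (Sym2 V)} (hM : IsMatchingSet G M)
    (hP : ∀ u : V, ∃ e ∈ M, u ∈ e) : M.card - 1 ≤ matchNum (deleteVert G v) := by
  classical
  obtain ⟨e0, he0M, hve0⟩ := hP v
  have huniq : ∀ e ∈ M, v ∈ e → e = e0 := by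
    intro e he hve
    by_contra hne
    exact hM.2 e he e0 he0M hne v ⟨hve, hve0⟩
  set M' := M.erase e0 with hM'
  have hnov : ∀ e ∈ M', ∀ a ∈ e, a ≠ v := by
    intro e he a ha hav
    subst hav
    exact (Finset.ne_of_mem_erase he) (huniq e (Finset.mem_of_mem_erase he) ha)
  set F : {e // e ∈ M'} → Sym2 {u : V // u ≠ v} :=
    fun x => Sym2.attachWith x.1 (hnov x.1 x.2) with hF
  set M'' := M'.attach.image F with hM''
  have hval : ∀ x : {e // e ∈ M'}, Sym2.map Subtype.val (F x) = x.1 := fun x =>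
    Sym2.attachWith_map_subtypeVal _
  have hFinj : Function.Injective F := by
    intro x y hxy
    apply Subtype.ext
    rw [← hval x, ← hval y, hxy]
  have hcard : M''.card = M.card - 1 := by
    rw [hM'', Finset.card_image_of_injective _ hFinj, Finset.card_attach,
      hM', Finset.card_erase_of_mem he0M]
  have hmem : ∀ e'' ∈ M'', Sym2.map Subtype.val e'' ∈ M' := by
    intro e'' he''
    obtain ⟨x, _, rfl⟩ := Finset.mem_image.mp he''
    rw [hval]; exact x.2
  have hmatch : IsMatchingSet (deleteVert G v) M'' := by
    constructor
    · intro e'' he''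
      rw [deleteVert, aux_mem_comap_edgeSet]
      exact hM.1 (Finset.mem_of_mem_erase (hmem e'' he''))
    · rintro e'' he'' f'' hf'' hne x ⟨hxe, hxf⟩
      obtain ⟨xe, _, rfl⟩ := Finset.mem_image.mp he''
      obtain ⟨xf, _, rfl⟩ := Finset.mem_image.mp hf''
      have hne' : xe.1 ≠ xf.1 := fun h => hne (congrArg F (Subtype.ext h))
      refine hM.2 xe.1 (Finset.mem_of_mem_erase xe.2) xf.1 (Finset.mem_of_mem_erase xf.2)
        hne' x.1 ⟨?_, ?_⟩
      · rw [← hval xe]; exact Sym2.mem_map.mpr ⟨x, hxe, rfl⟩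
      · rw [← hval xf]; exact Sym2.mem_map.mpr ⟨x, hxf, rfl⟩
  calc M.card - 1 = M''.card := hcard.symm
    _ ≤ matchNum (deleteVert G v) := aux_matching_le _ hmatch

end Del

theorem stmt_3 {V : Type*} [Fintype V] [DecidableEq V] (G : SimpleGraph V)
    (hKE : IsKonigEgervary G) (hPM : HasPerfectMatching G) (v : V) :
    v ∈ core G ↔ ¬ IsKonigEgervary (deleteVert G v) := by
  obtain ⟨M, hM, hP⟩ := hPM
  have h2k : 2 * M.card = Fintype.card V := aux_perfect_card G hM hP
  have hk1 : 1 ≤ M.card := by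
    obtain ⟨e, he, _⟩ := hP v
    exact Finset.card_pos.mpr ⟨e, he⟩
  obtain ⟨N, hN, hNc⟩ := aux_exists_maxMatching G
  have hm_le : 2 * matchNum G ≤ Fintype.card V := hNc ▸ aux_two_mul_card G hN
  have hm_ge : M.card ≤ matchNum G := aux_matching_le G hM
  have hiG : indepNum G = M.card := by
    unfold IsKonigEgervary at hKE; omega
  have hcd : Fintype.card {u : V // u ≠ v} = Fintype.card V - 1 := aux_card_del v
  obtain ⟨N', hN', hN'c⟩ := aux_exists_maxMatching (deleteVert G v)
  have hub : 2 * matchNum (deleteVert G v) ≤ Fintype.card V - 1 := by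
    rw [← hN'c, ← hcd]; exact aux_two_mul_card _ hN'
  have hlb : M.card - 1 ≤ matchNum (deleteVert G v) := aux_matchNum_del_ge G v hM hP
  have hile : indepNum (deleteVert G v) ≤ M.card := hiG ▸ aux_indepNum_del_le G v
  rw [aux_core_iff, hiG]
  unfold IsKonigEgervary
  rw [hcd]
  omega
end

section
/- Let G be a finite simple connected König-Egerváry graph with at least two vertices. Then α(G) > |V(G)|/2 if and only if |core(G)| > |N(core(G))| ≥ 1, where N(core(G)) denotes the set of all vertices adjacent to some vertex of core(G). -/
/-!
Fix a maximum matching `M` and a maximum independent set `I`. The König–Egerváry equality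
says that the vertex cover `Iᶜ` has exactly `μ(G)` vertices, so the cover is tight: every
vertex outside `I` is matched, and every edge of `M` has exactly one end in `I`.

If `2α > n`, some vertex `u` is left unmatched (`I` cannot be matched into `M`); then `u`
lies in every maximum independent set, so `u ∈ core G`, and `u` has a neighbour by
connectivity. Each `w ∈ N(core)` is in no maximum independent set, hence is matched, and its
mate lies in every maximum independent set; matching `N(core)` into `core \ {u}` gives
`|N(core)| < |core|`. If `2α ≤ n`, the tightness argument applied to `I` as well shows
that `M` is perfect, and matching `core` into `N(core)` gives `|core| ≤ |N(core)|`.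
-/

theorem Set.ncard_le_ncard_of_forall_subsingleton {α β : Type*} {s : Set α} {t : Set β}
    (r : α → β → Prop) (hs : ∀ a ∈ s, ∃ b ∈ t, r a b)
    (ht : ∀ b ∈ t, {a ∈ s | r a b}.Subsingleton) (htf : t.Finite := by toFinite_tac) :
    s.ncard ≤ t.ncard := by
  rcases s.eq_empty_or_nonempty with rfl | ⟨a₀, ha₀⟩
  · simp
  have : Nonempty β := ⟨(hs a₀ ha₀).choose⟩
  choose! f hft hr using hs
  exact Set.ncard_le_ncard_of_injOn f hft
    (fun a ha b hb hab => ht (f a) (hft a ha) ⟨ha, hr a ha⟩ ⟨hb, hab ▸ hr b hb⟩) htf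

theorem IsIndep.mem_compl_or_mem_compl {V : Type*} {G : SimpleGraph V} {I : Set V}
    (hI : IsIndep G I) {a b : V} (hab : G.Adj a b) : a ∈ Iᶜ ∨ b ∈ Iᶜ :=
  not_and_or.1 fun h => hI a h.1 b h.2 hab

namespace IsMatchingSet

variable {V : Type*} {G : SimpleGraph V} {M : Finset (Sym2 V)}

theorem mono (hM : IsMatchingSet G M) {M' : Finset (Sym2 V)} (h : M' ⊆ M) :
    IsMatchingSet G M' :=
  ⟨(Finset.coe_subset.2 h).trans hM.1, fun e he f hf => hM.2 e (h he) f (h hf)⟩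

theorem adj (hM : IsMatchingSet G M) {a b : V} (h : s(a, b) ∈ M) : G.Adj a b :=
  hM.1 h

theorem eq_of_mem_of_mem (hM : IsMatchingSet G M) {e f : Sym2 V} {x : V} (he : e ∈ M)
    (hf : f ∈ M) (hxe : x ∈ e) (hxf : x ∈ f) : e = f := by
  by_contra hne
  exact hM.2 e he f hf hne x ⟨hxe, hxf⟩

theorem left_unique (hM : IsMatchingSet G M) {a b c : V} (ha : s(a, c) ∈ M)
    (hb : s(b, c) ∈ M) : a = b :=
  Sym2.congr_left.1 (hM.eq_of_mem_of_mem ha hb (Sym2.mem_mk_right a c) (Sym2.mem_mk_right b c))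

theorem ncard_le_ncard_of_forall_mk_mem [Finite V] (hM : IsMatchingSet G M) {A B : Set V}
    (h : ∀ a ∈ A, ∃ b ∈ B, s(a, b) ∈ M) : A.ncard ≤ B.ncard :=
  Set.ncard_le_ncard_of_forall_subsingleton (fun a b => s(a, b) ∈ M) h
    fun _ _ _ ha _ hb => hM.left_unique ha.2 hb.2

theorem ncard_le_ncard_nbhd [Finite V] (hM : IsMatchingSet G M)
    (hperfect : ∀ v, ∃ w, s(v, w) ∈ M) (A : Set V) : A.ncard ≤ (nbhd G A).ncard :=
  hM.ncard_le_ncard_of_forall_mk_mem fun u hu =>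
    let ⟨w, huw⟩ := hperfect u
    ⟨w, ⟨u, hu, hM.adj huw⟩, huw⟩

theorem ncard_le_card_of_isIndep [Finite V] (hM : IsMatchingSet G M) {I : Set V}
    (hI : IsIndep G I) (hcov : ∀ v ∈ I, ∃ w, s(v, w) ∈ M) : I.ncard ≤ M.card := by
  rw [← Set.ncard_coe_finset M]
  refine Set.ncard_le_ncard_of_forall_subsingleton (fun v e => v ∈ e) (fun v hv => ?_)
    fun e he u hu v hv => ?_
  · obtain ⟨w, hw⟩ := hcov v hv
    exact ⟨_, hw, Sym2.mem_mk_left v w⟩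
  · by_contra hne
    have huv : e = s(u, v) := (Sym2.mem_and_mem_iff hne).1 ⟨hu.2, hv.2⟩
    exact hI u hu.1 v hv.1 (hM.adj (huv ▸ he))

theorem card_le_ncard_of_covers [Finite V] (hM : IsMatchingSet G M) {T : Set V}
    (hT : ∀ ⦃a b⦄, s(a, b) ∈ M → a ∈ T ∨ b ∈ T) : M.card ≤ T.ncard := by
  rw [← Set.ncard_coe_finset]
  refine Set.ncard_le_ncard_of_forall_subsingleton (fun e v => v ∈ e) ?_
    fun v _ e he f hf => hM.eq_of_mem_of_mem he.1 hf.1 he.2 hf.2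
  refine fun e => Sym2.ind (fun a b hab => ?_) e
  rcases hT hab with ha | hb
  · exact ⟨a, ha, Sym2.mem_mk_left a b⟩
  · exact ⟨b, hb, Sym2.mem_mk_right a b⟩

theorem exists_mk_mem_of_covers_of_ncard_le [Finite V] (hM : IsMatchingSet G M) {T : Set V}
    (hT : ∀ ⦃a b⦄, s(a, b) ∈ M → a ∈ T ∨ b ∈ T) (hcard : T.ncard ≤ M.card) {v : V}
    (hv : v ∈ T) : ∃ w, s(v, w) ∈ M := by
  by_contra! hfree
  have hcover : ∀ ⦃a b⦄, s(a, b) ∈ M → a ∈ T \ {v} ∨ b ∈ T \ {v} := by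
    intro a b hab
    have hav : a ≠ v := by rintro rfl; exact hfree b hab
    have hbv : b ≠ v := by rintro rfl; exact hfree a (Sym2.eq_swap ▸ hab)
    rcases hT hab with ha | hb
    · exact .inl ⟨ha, hav⟩
    · exact .inr ⟨hb, hbv⟩
  have := hM.card_le_ncard_of_covers hcover
  have := Set.ncard_sdiff_singleton_lt_of_mem hv
  omega

theorem eq_of_covers_of_ncard_le [Finite V] (hM : IsMatchingSet G M) {T : Set V}
    (hT : ∀ ⦃a b⦄, s(a, b) ∈ M → a ∈ T ∨ b ∈ T) (hcard : T.ncard ≤ M.card) {a b : V}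
    (hab : s(a, b) ∈ M) (ha : a ∈ T) (hb : b ∈ T) : a = b := by
  classical
  by_contra hne
  -- Deleting the edge `s(a, b)` and its two ends from `T` leaves a cover that is too small.
  have hnot : ∀ e ∈ M.erase s(a, b), ∀ x ∈ s(a, b), x ∉ e := fun e he x hx hxe =>
    Finset.ne_of_mem_erase he (hM.eq_of_mem_of_mem (Finset.mem_of_mem_erase he) hab hxe hx)
  have hcover : ∀ ⦃c d⦄, s(c, d) ∈ M.erase s(a, b) → c ∈ T \ {a, b} ∨ d ∈ T \ {a, b} := by
    intro c d hcd
    have hc : c ∉ ({a, b} : Set V) := fun h =>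
      hnot _ hcd c (Sym2.mem_iff.2 h) (Sym2.mem_mk_left c d)
    have hd : d ∉ ({a, b} : Set V) := fun h =>
      hnot _ hcd d (Sym2.mem_iff.2 h) (Sym2.mem_mk_right c d)
    rcases hT (Finset.mem_of_mem_erase hcd) with hcT | hdT
    · exact .inl ⟨hcT, hc⟩
    · exact .inr ⟨hdT, hd⟩
  have := (hM.mono (M.erase_subset _)).card_le_ncard_of_covers hcover
  rw [Finset.card_erase_of_mem hab] at this
  have := Set.ncard_sdiff_add_ncard_of_subset (Set.insert_subset ha (Set.singleton_subset_iff.2 hb))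
  have := Set.ncard_pair hne
  have := Finset.card_pos.2 ⟨_, hab⟩
  omega

end IsMatchingSet

section KonigEgervary

variable {V : Type*} [Fintype V] {G : SimpleGraph V} {M : Finset (Sym2 V)} {I : Set V}

theorem exists_isMaxIndep (G : SimpleGraph V) : ∃ I, IsMaxIndep G I := by
  classical
  exact Nat.findGreatest_spec (P := fun n => ∃ I : Set V, IsIndep G I ∧ I.ncard = n)
    (Nat.zero_le _) ⟨∅, fun u hu => hu.elim, Set.ncard_empty V⟩

theorem exists_isMatchingSet_card_eq_matchNum (G : SimpleGraph V) :
    ∃ M, IsMatchingSet G M ∧ M.card = matchNum G := by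
  classical
  exact Nat.findGreatest_spec (P := fun n => ∃ M, IsMatchingSet G M ∧ M.card = n)
    (Nat.zero_le _) ⟨∅, ⟨by simp, by simp⟩, rfl⟩

theorem notMem_of_mem_nbhd_core {w : V} (hw : w ∈ nbhd G (core G)) (hI : IsMaxIndep G I) :
    w ∉ I := by
  obtain ⟨u, hu, huw⟩ := hw
  exact fun hwI => hI.1 u (hu I hI) w hwI huw

namespace IsKonigEgervary

theorem ncard_compl_le (hKE : IsKonigEgervary G) (hMc : M.card = matchNum G)
    (hI : IsMaxIndep G I) : Iᶜ.ncard ≤ M.card := by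
  have hsum : indepNum G + matchNum G = Fintype.card V := hKE
  have := Set.ncard_add_ncard_compl I
  rw [Nat.card_eq_fintype_card, hI.2] at this
  omega

theorem exists_mk_mem_of_notMem (hKE : IsKonigEgervary G) (hM : IsMatchingSet G M)
    (hMc : M.card = matchNum G) (hI : IsMaxIndep G I) {v : V} (hv : v ∉ I) :
    ∃ w, s(v, w) ∈ M :=
  hM.exists_mk_mem_of_covers_of_ncard_le
    (fun _ _ hab => hI.1.mem_compl_or_mem_compl (hM.adj hab)) (hKE.ncard_compl_le hMc hI) hv

theorem mem_or_mem (hKE : IsKonigEgervary G) (hM : IsMatchingSet G M)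
    (hMc : M.card = matchNum G) (hI : IsMaxIndep G I) {a b : V} (hab : s(a, b) ∈ M) :
    a ∈ I ∨ b ∈ I := by
  by_contra! h
  exact (hM.adj hab).ne <| hM.eq_of_covers_of_ncard_le
    (fun _ _ hcd => hI.1.mem_compl_or_mem_compl (hM.adj hcd)) (hKE.ncard_compl_le hMc hI)
    hab h.1 h.2

theorem mem_core_of_unmatched (hKE : IsKonigEgervary G) (hM : IsMatchingSet G M)
    (hMc : M.card = matchNum G) {u : V} (hu : ∀ w, s(u, w) ∉ M) : u ∈ core G := fun J hJ => by
  by_contra huJ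
  obtain ⟨w, hw⟩ := hKE.exists_mk_mem_of_notMem hM hMc hJ huJ
  exact hu w hw

theorem ncard_nbhd_core_lt (hKE : IsKonigEgervary G) (hM : IsMatchingSet G M)
    (hMc : M.card = matchNum G) {u : V} (hu : ∀ w, s(u, w) ∉ M) :
    (nbhd G (core G)).ncard < (core G).ncard := by
  obtain ⟨I, hI⟩ := exists_isMaxIndep G
  have hmatch : (nbhd G (core G)).ncard ≤ (core G \ {u}).ncard :=
    hM.ncard_le_ncard_of_forall_mk_mem fun w hw => by
      obtain ⟨m, hwm⟩ :=
        hKE.exists_mk_mem_of_notMem hM hMc hI (notMem_of_mem_nbhd_core hw hI)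
      refine ⟨m, ⟨fun J hJ => ?_, ?_⟩, hwm⟩
      · exact (hKE.mem_or_mem hM hMc hJ hwm).resolve_left (notMem_of_mem_nbhd_core hw hJ)
      · rintro rfl
        exact hu w (Sym2.eq_swap ▸ hwm)
  exact hmatch.trans_lt
    (Set.ncard_sdiff_singleton_lt_of_mem (hKE.mem_core_of_unmatched hM hMc hu))

theorem exists_mk_mem_of_two_mul_le (hKE : IsKonigEgervary G) (hM : IsMatchingSet G M)
    (hMc : M.card = matchNum G) (hα : 2 * indepNum G ≤ Fintype.card V) (v : V) :
    ∃ w, s(v, w) ∈ M := by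
  obtain ⟨I, hI⟩ := exists_isMaxIndep G
  by_cases hv : v ∈ I
  · have hsum : indepNum G + matchNum G = Fintype.card V := hKE
    exact hM.exists_mk_mem_of_covers_of_ncard_le (fun _ _ => hKE.mem_or_mem hM hMc hI)
      (by rw [hI.2]; omega) hv
  · exact hKE.exists_mk_mem_of_notMem hM hMc hI hv

end IsKonigEgervary

end KonigEgervary

theorem stmt_10 {V : Type*} [Fintype V] (G : SimpleGraph V)
    (hKE : IsKonigEgervary G) (hConn : G.Connected) (hCard : 2 ≤ Fintype.card V) :
    2 * indepNum G > Fintype.card V ↔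
      (core G).ncard > (nbhd G (core G)).ncard ∧ 1 ≤ (nbhd G (core G)).ncard := by
  obtain ⟨M, hM, hMc⟩ := exists_isMatchingSet_card_eq_matchNum G
  constructor
  · intro hα
    obtain ⟨u, hu⟩ : ∃ u, ∀ w, s(u, w) ∉ M := by
      by_contra! hcov
      obtain ⟨I, hI⟩ := exists_isMaxIndep G
      have hsum : indepNum G + matchNum G = Fintype.card V := hKE
      have := hM.ncard_le_card_of_isIndep hI.1 fun v _ => hcov v
      rw [hI.2] at this
      omega
    have : Nontrivial V := Fintype.one_lt_card_iff_nontrivial.1 hCard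
    obtain ⟨v, huv⟩ := hConn.preconnected.exists_adj_of_nontrivial u
    exact ⟨hKE.ncard_nbhd_core_lt hM hMc hu,
      (Set.ncard_pos).2 ⟨v, u, hKE.mem_core_of_unmatched hM hMc hu, huv⟩⟩
  · rintro ⟨hlt, -⟩
    by_contra! hα
    have := hM.ncard_le_ncard_nbhd (hKE.exists_mk_mem_of_two_mul_le hM hMc hα) (core G)
    omega
end

section
/- A finite simple graph G has a unique maximum independent set if and only if core(G) is a maximal independent set of G (i.e., core(G) is independent and is not properly contained in any independent set of G). -/
open Classical in
lemma indep_ncard_le {V : Type*} [Fintype V] (G : SimpleGraph V) {t : Set V}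
    (ht : IsIndep G t) : t.ncard ≤ indepNum G := by
  apply Nat.le_findGreatest
  · have := Set.ncard_le_ncard (Set.subset_univ t) Set.finite_univ
    rwa [Set.ncard_univ, Nat.card_eq_fintype_card] at this
  · exact ⟨t, ht, rfl⟩

open Classical in
lemma exists_maxIndep {V : Type*} [Fintype V] (G : SimpleGraph V) :
    ∃ s : Set V, IsMaxIndep G s := by
  unfold IsMaxIndep indepNum
  have h : ∃ s : Set V, IsIndep G s ∧ s.ncard = Nat.findGreatest (fun n => ∃ s : Set V, IsIndep G s ∧ s.ncard = n) (Fintype.card V) := by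
    exact Nat.findGreatest_spec (P := fun n => ∃ s : Set V, IsIndep G s ∧ s.ncard = n)
      (m := 0) (Nat.zero_le _) ⟨∅, fun u hu => hu.elim, Set.ncard_empty V⟩
  obtain ⟨s, hs, hc⟩ := h
  exact ⟨s, hs, hc⟩

theorem stmt_16 {V : Type*} [Fintype V] (G : SimpleGraph V) :
    (∃! s : Set V, IsMaxIndep G s) ↔
      (IsIndep G (core G) ∧
        ∀ t : Set V, IsIndep G t → core G ⊆ t → core G = t) := by
  constructor
  · rintro ⟨s, hs, huniq⟩
    have hcore : core G = s := by
      apply Set.eq_of_subset_of_subset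
      · exact fun v hv => hv s hs
      · intro v hv t ht
        rw [huniq t ht]; exact hv
    constructor
    · rw [hcore]; exact hs.1
    · intro t ht hsub
      rw [hcore] at hsub ⊢
      have h1 : t.ncard ≤ s.ncard := hs.2 ▸ indep_ncard_le G ht
      exact Set.eq_of_subset_of_ncard_le hsub h1 (Set.toFinite t)
  · rintro ⟨hind, hmax⟩
    obtain ⟨s, hs⟩ := exists_maxIndep G
    have key : ∀ u : Set V, IsMaxIndep G u → u = core G := by
      intro u hu
      exact (hmax u hu.1 (fun v hv => hv u hu)).symm
    refine ⟨core G, ?_, key⟩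
    rw [← key s hs] at hind ⊢
    exact hs
end
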